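/- arXiv:2111.06239 — 2 statements merged into one kernel-verified Lean document; each statement's English description precedes it below -/
import Mathlib

section
/- Let ω ⊆ ℝ² be a bounded measurable set. Let η : ℝ × ℝ² → ℝ and g : ℝ × ℝ² × ℝ → ℝ be continuous functions which are continuously differentiable in the time variable t, and assume that η, ∂_t η, g and ∂_t g are bounded. Define F(t) = ∫_ω ( ∫_0^{η(t,x')} g(t, x', z) dz ) dx'. Then F is differentiable on ℝ and for every t, F'(t) = ∫_ω ( ∫_0^{η(t,x')} ∂_t g(t, x', z) dz ) dx' + ∫_ω ∂_t η(t,x') · g(t, x', η(t,x')) dx'. -/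
open MeasureTheory

/-- Auxiliary lemma: derivative of the "moving boundary" term
`t ↦ ∫ z in e t₀ .. e t, f t z` at `t₀`. -/
lemma aux_moving_boundary (f : ℝ → ℝ → ℝ) (e : ℝ → ℝ) (t₀ e' C : ℝ) (hC : 0 ≤ C)
    (hf : Continuous fun p : ℝ × ℝ => f p.1 p.2)
    (he : HasDerivAt e e' t₀)
    (hlip : ∀ t, |e t - e t₀| ≤ C * |t - t₀|) :
    HasDerivAt (fun t => ∫ z in (e t₀)..(e t), f t z) (e' * f t₀ (e t₀)) t₀ := by
  set f₀ := f t₀ (e t₀) with hf₀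
  have hfz : ∀ t, Continuous fun z => f t z := fun t =>
    hf.comp (continuous_const.prodMk continuous_id)
  -- the error term
  have key : Filter.Tendsto
      (fun t => ((∫ z in (e t₀)..(e t), f t z) - (e t - e t₀) * f₀) / (t - t₀))
      (nhdsWithin t₀ {t₀}ᶜ) (nhds 0) := by
    rw [Metric.tendsto_nhdsWithin_nhds]
    intro ε hε
    have hcε : (0:ℝ) < ε / (2 * (C + 1)) := by positivity
    obtain ⟨δ, hδpos, hδ⟩ := Metric.continuousAt_iff.mp hf.continuousAt _ hcε
    refine ⟨min δ (δ / (C + 1)), by positivity, ?_⟩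
    intro t ht hdist
    have htne : t ≠ t₀ := ht
    have htabs : |t - t₀| < min δ (δ / (C + 1)) := by
      rwa [Real.dist_eq] at hdist
    have htpos : 0 < |t - t₀| := abs_pos.mpr (sub_ne_zero.mpr htne)
    -- pointwise estimate on the integrand
    have hbound : ∀ z ∈ Set.uIoc (e t₀) (e t), ‖f t z - f₀‖ ≤ ε / (2 * (C + 1)) := by
      intro z hz
      have hz' : |z - e t₀| ≤ |e t - e t₀| := by
        rcases le_total (e t₀) (e t) with h | h
        · rw [Set.uIoc_of_le h] at hz
          rw [abs_of_nonneg (by linarith [hz.1] : (0:ℝ) ≤ z - e t₀),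
            abs_of_nonneg (by linarith : (0:ℝ) ≤ e t - e t₀)]
          linarith [hz.2]
        · rw [Set.uIoc_of_ge h] at hz
          rw [abs_of_nonpos (by linarith [hz.2] : z - e t₀ ≤ 0),
            abs_of_nonpos (by linarith : e t - e t₀ ≤ 0)]
          linarith [hz.1]
      have hzδ : |z - e t₀| < δ := by
        calc |z - e t₀| ≤ |e t - e t₀| := hz'
          _ ≤ C * |t - t₀| := hlip t
          _ ≤ (C + 1) * |t - t₀| := by nlinarith
          _ < (C + 1) * (δ / (C + 1)) := by
              have := lt_of_lt_of_le htabs (min_le_right _ _)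
              exact (mul_lt_mul_iff_right₀ (by positivity)).mpr this
          _ = δ := by field_simp
      have hdd : dist ((t, z) : ℝ × ℝ) ((t₀, e t₀) : ℝ × ℝ) < δ := by
        rw [Prod.dist_eq]
        apply max_lt
        · rw [Real.dist_eq]; exact lt_of_lt_of_le htabs (min_le_left _ _)
        · rw [Real.dist_eq]; exact hzδ
      have := hδ hdd
      rw [Real.dist_eq] at this
      simpa [Real.norm_eq_abs] using this.le
    have hsub : ((∫ z in (e t₀)..(e t), f t z) - (e t - e t₀) * f₀)
        = ∫ z in (e t₀)..(e t), (f t z - f₀) := by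
      rw [intervalIntegral.integral_sub ((hfz t).intervalIntegrable _ _)
        (intervalIntegrable_const), intervalIntegral.integral_const, smul_eq_mul]
    have hnum : ‖∫ z in (e t₀)..(e t), (f t z - f₀)‖ ≤ ε / (2 * (C + 1)) * |e t - e t₀| :=
      intervalIntegral.norm_integral_le_of_norm_le_const hbound
    rw [Real.dist_eq, sub_zero, abs_div, hsub]
    calc ‖∫ z in (e t₀)..(e t), (f t z - f₀)‖ / |t - t₀|
        ≤ (ε / (2 * (C + 1)) * (C * |t - t₀|)) / |t - t₀| := by
          gcongr
          exact hnum.trans (by nlinarith [hlip t, hcε.le])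
      _ = ε * C / (2 * (C + 1)) := by field_simp
      _ < ε := by rw [div_lt_iff₀ (by positivity)]; nlinarith
  -- the slope term for e
  have hslope : Filter.Tendsto (fun t => slope e t₀ t * f₀) (nhdsWithin t₀ {t₀}ᶜ)
      (nhds (e' * f₀)) :=
    (hasDerivAt_iff_tendsto_slope.mp he).mul_const f₀
  rw [hasDerivAt_iff_tendsto_slope]
  have heq : (fun t => ((∫ z in (e t₀)..(e t), f t z) - (e t - e t₀) * f₀) / (t - t₀)
      + slope e t₀ t * f₀)
      =ᶠ[nhdsWithin t₀ {t₀}ᶜ] slope (fun t => ∫ z in (e t₀)..(e t), f t z) t₀ := by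
    filter_upwards [self_mem_nhdsWithin] with t ht
    have ht' : t - t₀ ≠ 0 := sub_ne_zero.mpr ht
    rw [slope_def_field, slope_def_field, intervalIntegral.integral_same]
    field_simp
    try ring
  have := (key.add hslope).congr' heq
  simpa using this

/-- Reynolds' transport theorem for a region bounded by the moving graph
`z = η(t, x')`: the function `F(t) = ∫_ω ∫_0^{η(t,x')} g(t,x',z) dz dx'` is
differentiable and
`F'(t) = ∫_ω ∫_0^{η(t,x')} ∂_t g dz dx' + ∫_ω ∂_t η(t,x') g(t,x',η(t,x')) dx'`. -/
theorem reynolds_transport_graph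
    (ω : Set (EuclideanSpace ℝ (Fin 2))) (hωmeas : MeasurableSet ω)
    (hωbdd : Bornology.IsBounded ω)
    (η ηt : ℝ → EuclideanSpace ℝ (Fin 2) → ℝ)
    (g gt : ℝ → EuclideanSpace ℝ (Fin 2) → ℝ → ℝ)
    (hηcont : Continuous (fun p : ℝ × EuclideanSpace ℝ (Fin 2) => η p.1 p.2))
    (hηtcont : Continuous (fun p : ℝ × EuclideanSpace ℝ (Fin 2) => ηt p.1 p.2))
    (hηderiv : ∀ t x', HasDerivAt (fun s => η s x') (ηt t x') t)
    (hgcont : Continuous (fun p : ℝ × EuclideanSpace ℝ (Fin 2) × ℝ => g p.1 p.2.1 p.2.2))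
    (hgtcont : Continuous (fun p : ℝ × EuclideanSpace ℝ (Fin 2) × ℝ => gt p.1 p.2.1 p.2.2))
    (hgderiv : ∀ t x' z, HasDerivAt (fun s => g s x' z) (gt t x' z) t)
    (Cη Cηt Cg Cgt : ℝ)
    (hηbdd : ∀ t x', |η t x'| ≤ Cη)
    (hηtbdd : ∀ t x', |ηt t x'| ≤ Cηt)
    (hgbdd : ∀ t x' z, |g t x' z| ≤ Cg)
    (hgtbdd : ∀ t x' z, |gt t x' z| ≤ Cgt)
    (F : ℝ → ℝ)
    (hF : ∀ t, F t = ∫ x' in ω, ∫ z in (0 : ℝ)..(η t x'), g t x' z) :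
    ∀ t, HasDerivAt F
      ((∫ x' in ω, ∫ z in (0 : ℝ)..(η t x'), gt t x' z)
        + ∫ x' in ω, ηt t x' * g t x' (η t x')) t := by
  classical
  -- nonnegativity of the constants
  have hCη : 0 ≤ Cη := (abs_nonneg _).trans (hηbdd 0 0)
  have hCηt : 0 ≤ Cηt := (abs_nonneg _).trans (hηtbdd 0 0)
  have hCg : 0 ≤ Cg := (abs_nonneg _).trans (hgbdd 0 0 0)
  have hCgt : 0 ≤ Cgt := (abs_nonneg _).trans (hgtbdd 0 0 0)
  -- finite measure on ω
  haveI : IsFiniteMeasure (volume.restrict ω) :=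
    ⟨by rw [Measure.restrict_apply_univ]; exact hωbdd.measure_lt_top (μ := volume)⟩
  -- continuity in z for fixed (t, x')
  have hgz : ∀ t (x' : EuclideanSpace ℝ (Fin 2)), Continuous fun z => g t x' z := fun t x' =>
    hgcont.comp (Continuous.prodMk (continuous_const : Continuous fun _ : ℝ => t)
      (Continuous.prodMk (continuous_const : Continuous fun _ : ℝ => x') continuous_id))
  have hgtz : ∀ t (x' : EuclideanSpace ℝ (Fin 2)), Continuous fun z => gt t x' z := fun t x' =>
    hgtcont.comp (Continuous.prodMk (continuous_const : Continuous fun _ : ℝ => t)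
      (Continuous.prodMk (continuous_const : Continuous fun _ : ℝ => x') continuous_id))
  -- Lipschitz estimate for η in time
  have hηlip : ∀ (x' : EuclideanSpace ℝ (Fin 2)) t t₀, |η t x' - η t₀ x'| ≤ Cηt * |t - t₀| := by
    intro x' t t₀
    have := convex_univ.norm_image_sub_le_of_norm_hasDerivWithin_le
      (f := fun s => η s x') (f' := fun s => ηt s x') (s := Set.univ) (C := Cηt)
      (fun s _ => (hηderiv s x').hasDerivWithinAt)
      (fun s _ => by simpa [Real.norm_eq_abs] using hηtbdd s x')
      (Set.mem_univ t₀) (Set.mem_univ t)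
    simpa [Real.norm_eq_abs] using this
  -- the inner integrals
  set Fi : ℝ → EuclideanSpace ℝ (Fin 2) → ℝ := fun t x' => ∫ z in (0 : ℝ)..(η t x'), g t x' z with hFi
  set Gi : ℝ → EuclideanSpace ℝ (Fin 2) → ℝ := fun t x' => ∫ z in (0 : ℝ)..(η t x'), gt t x' z with hGi
  -- continuity of the inner integrals in x'
  have hFicont : ∀ t, Continuous (Fi t) := by
    intro t
    apply intervalIntegral.continuous_parametric_intervalIntegral_of_continuous
      (f := fun (x' : EuclideanSpace ℝ (Fin 2)) z => g t x' z) (μ := volume) (a₀ := 0) (s := fun x' => η t x')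
    · exact hgcont.comp (continuous_const.prodMk continuous_id)
    · exact hηcont.comp (continuous_const.prodMk continuous_id)
  have hGicont : ∀ t, Continuous (Gi t) := by
    intro t
    apply intervalIntegral.continuous_parametric_intervalIntegral_of_continuous
      (f := fun (x' : EuclideanSpace ℝ (Fin 2)) z => gt t x' z) (μ := volume) (a₀ := 0) (s := fun x' => η t x')
    · exact hgtcont.comp (continuous_const.prodMk continuous_id)
    · exact hηcont.comp (continuous_const.prodMk continuous_id)
  have hRcont : ∀ t, Continuous fun x' : EuclideanSpace ℝ (Fin 2) => ηt t x' * g t x' (η t x') := by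
    intro t
    have h1 : Continuous fun x' : EuclideanSpace ℝ (Fin 2) => ηt t x' :=
      hηtcont.comp (continuous_const.prodMk continuous_id)
    have h2 : Continuous fun x' : EuclideanSpace ℝ (Fin 2) => g t x' (η t x') :=
      hgcont.comp (continuous_const.prodMk (continuous_id.prodMk
        (hηcont.comp (continuous_const.prodMk continuous_id))))
    exact h1.mul h2
  -- bounds on the inner integrals
  have hFibdd : ∀ t (x' : EuclideanSpace ℝ (Fin 2)), |Fi t x'| ≤ Cg * Cη := by
    intro t x'
    have h1 : ‖∫ z in (0 : ℝ)..(η t x'), g t x' z‖ ≤ Cg * |η t x' - 0| :=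
      intervalIntegral.norm_integral_le_of_norm_le_const fun z _ => by
        simpa [Real.norm_eq_abs] using hgbdd t x' z
    rw [Real.norm_eq_abs, sub_zero] at h1
    exact h1.trans (mul_le_mul_of_nonneg_left (hηbdd t x') hCg)
  have hGibdd : ∀ t (x' : EuclideanSpace ℝ (Fin 2)), |Gi t x'| ≤ Cgt * Cη := by
    intro t x'
    have h1 : ‖∫ z in (0 : ℝ)..(η t x'), gt t x' z‖ ≤ Cgt * |η t x' - 0| :=
      intervalIntegral.norm_integral_le_of_norm_le_const fun z _ => by
        simpa [Real.norm_eq_abs] using hgtbdd t x' z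
    rw [Real.norm_eq_abs, sub_zero] at h1
    exact h1.trans (mul_le_mul_of_nonneg_left (hηbdd t x') hCgt)
  have hRbdd : ∀ t (x' : EuclideanSpace ℝ (Fin 2)), |ηt t x' * g t x' (η t x')| ≤ Cηt * Cg := by
    intro t x'
    rw [abs_mul]
    exact mul_le_mul (hηtbdd t x') (hgbdd t x' (η t x')) (abs_nonneg _) hCηt
  -- integrability of continuous bounded functions on ω
  have hinteg : ∀ (h : EuclideanSpace ℝ (Fin 2) → ℝ), Continuous h → ∀ M : ℝ, (∀ x', |h x'| ≤ M) →
      Integrable h (volume.restrict ω) := by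
    intro h hc M hM
    exact (integrable_const M).mono' hc.aestronglyMeasurable
      (Filter.Eventually.of_forall fun x' => by simpa [Real.norm_eq_abs] using hM x')
  -- pointwise-in-x' time derivative of the inner integral
  have hinner : ∀ (t₀ : ℝ) (x' : EuclideanSpace ℝ (Fin 2)), HasDerivAt (fun s => Fi s x')
      (Gi t₀ x' + ηt t₀ x' * g t₀ x' (η t₀ x')) t₀ := by
    intro t₀ x'
    -- derivative of the fixed-region part
    have hA : HasDerivAt (fun s => ∫ z in (0 : ℝ)..(η t₀ x'), g s x' z) (Gi t₀ x') t₀ := by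
      have := intervalIntegral.hasDerivAt_integral_of_dominated_loc_of_deriv_le
        (μ := volume) (F := fun s z => g s x' z) (F' := fun s z => gt s x' z)
        (x₀ := t₀) (a := 0) (b := η t₀ x') (bound := fun _ => Cgt) (s := Metric.ball t₀ 1) (Metric.ball_mem_nhds t₀ one_pos)
        (Filter.Eventually.of_forall fun s => ((hgz s x').aestronglyMeasurable))
        (((hgz t₀ x')).intervalIntegrable _ _)
        ((hgtz t₀ x').aestronglyMeasurable)
        (Filter.Eventually.of_forall fun z _ s _ => by
          simpa [Real.norm_eq_abs] using hgtbdd s x' z)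
        (intervalIntegrable_const)
        (Filter.Eventually.of_forall fun z _ s _ => hgderiv s x' z)
      exact this.2
    -- derivative of the moving-region part
    have hB : HasDerivAt (fun s => ∫ z in (η t₀ x')..(η s x'), g s x' z)
        (ηt t₀ x' * g t₀ x' (η t₀ x')) t₀ := by
      apply aux_moving_boundary (fun s z => g s x' z) (fun s => η s x') t₀
        (ηt t₀ x') Cηt hCηt
      · exact hgcont.comp (continuous_fst.prodMk (continuous_const.prodMk continuous_snd))
      · exact hηderiv t₀ x'
      · exact fun t => hηlip x' t t₀
    have hsum := hA.add hB
    have hsplit : (fun s => (∫ z in (0 : ℝ)..(η t₀ x'), g s x' z)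
        + ∫ z in (η t₀ x')..(η s x'), g s x' z) = fun s => Fi s x' := by
      funext s
      exact intervalIntegral.integral_add_adjacent_intervals
        ((hgz s x').intervalIntegrable _ _) ((hgz s x').intervalIntegrable _ _)
    rw [← hsplit]; exact hsum
  -- apply differentiation under the integral sign over ω
  intro t₀
  have main := hasDerivAt_integral_of_dominated_loc_of_deriv_le
    (μ := volume.restrict ω) (F := Fi)
    (F' := fun t x' => Gi t x' + ηt t x' * g t x' (η t x'))
    (x₀ := t₀) (bound := fun _ => Cgt * Cη + Cηt * Cg) (s := Metric.ball t₀ 1) (Metric.ball_mem_nhds t₀ one_pos)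
    (Filter.Eventually.of_forall fun t => (hFicont t).aestronglyMeasurable)
    (hinteg (Fi t₀) (hFicont t₀) (Cg * Cη) (hFibdd t₀))
    (((hGicont t₀).add (hRcont t₀)).aestronglyMeasurable)
    (Filter.Eventually.of_forall fun x' t _ => by
      have := (abs_add_le (Gi t x') (ηt t x' * g t x' (η t x'))).trans
        (add_le_add (hGibdd t x') (hRbdd t x'))
      simpa [Real.norm_eq_abs] using this)
    (integrable_const _)
    (Filter.Eventually.of_forall fun x' t _ => hinner t x')
  have hDeriv := main.2
  have hFeq : F = fun t => ∫ x' in ω, Fi t x' := funext hF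
  rw [hFeq]
  have hadd : (∫ x' in ω, (Gi t₀ x' + ηt t₀ x' * g t₀ x' (η t₀ x')))
      = (∫ x' in ω, Gi t₀ x') + ∫ x' in ω, ηt t₀ x' * g t₀ x' (η t₀ x') :=
    integral_add (hinteg (Gi t₀) (hGicont t₀) (Cgt * Cη) (hGibdd t₀))
      (hinteg _ (hRcont t₀) (Cηt * Cg) (hRbdd t₀))
  rw [hadd] at hDeriv
  exact hDeriv
end

section
/- Let n ≥ 1 and let ψ : ℝⁿ → ℝⁿ be of class C². For x ∈ ℝⁿ let Dψ(x) denote the Jacobian matrix, (Dψ(x))_{ij} = ∂ψⁱ/∂x_j (x), and let adj(Dψ(x)) denote its adjugate matrix. Then the columns of the adjugate field are divergence-free: for every j ∈ {1,…,n} and every x ∈ ℝⁿ, Σ_{i=1}^{n} ∂/∂x_i [ (adj(Dψ))_{ij} ](x) = 0. -/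
open Matrix

noncomputable def detCM (n : ℕ) :
    ContinuousMultilinearMap ℝ (fun _ : Fin n => (Fin n → ℝ)) ℝ :=
  MultilinearMap.mkContinuous
    ((Matrix.detRowAlternating : (Fin n → ℝ) [⋀^Fin n]→ₗ[ℝ] ℝ)).toMultilinearMap
    (Fintype.card (Equiv.Perm (Fin n))) (by
      intro m
      have h1 : ((Matrix.detRowAlternating : (Fin n → ℝ) [⋀^Fin n]→ₗ[ℝ] ℝ)).toMultilinearMap m
          = (Matrix.of m).det := rfl
      rw [h1, Matrix.det_apply]
      have hterm : ∀ σ : Equiv.Perm (Fin n),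
          ‖Equiv.Perm.sign σ • ∏ i, Matrix.of m (σ i) i‖ ≤ ∏ i, ‖m i‖ := by
        intro σ
        have h2 : ‖Equiv.Perm.sign σ • ∏ i, Matrix.of m (σ i) i‖ = ‖∏ i, m (σ i) i‖ := by
          rcases Int.units_eq_one_or (Equiv.Perm.sign σ) with h | h <;>
            simp [h, Units.smul_def, Matrix.of_apply]
        rw [h2]
        calc ‖∏ i, m (σ i) i‖ = ∏ i, |m (σ i) i| := by
              rw [Real.norm_eq_abs, Finset.abs_prod]
          _ ≤ ∏ i, ‖m (σ i)‖ := Finset.prod_le_prod (fun _ _ => abs_nonneg _)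
              (fun i _ => norm_le_pi_norm (m (σ i)) i)
          _ = ∏ i, ‖m i‖ := Equiv.prod_comp σ fun k => ‖m k‖
      calc ‖∑ σ : Equiv.Perm (Fin n), Equiv.Perm.sign σ • ∏ i, Matrix.of m (σ i) i‖
          ≤ ∑ σ : Equiv.Perm (Fin n), ‖Equiv.Perm.sign σ • ∏ i, Matrix.of m (σ i) i‖ :=
            norm_sum_le _ _
        _ ≤ ∑ _σ : Equiv.Perm (Fin n), ∏ i, ‖m i‖ := Finset.sum_le_sum fun σ _ => hterm σ
        _ = (Fintype.card (Equiv.Perm (Fin n))) * ∏ i, ‖m i‖ := by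
            rw [Finset.sum_const, Finset.card_univ, nsmul_eq_mul])

lemma detCM_apply (n : ℕ) (m : Fin n → Fin n → ℝ) : detCM n m = (Matrix.of m).det := rfl

lemma det_update_update_swap {n : ℕ} (A : Fin n → Fin n → ℝ) {j k : Fin n} (hkj : k ≠ j)
    (u v : Fin n → ℝ) :
    (Matrix.of (Function.update (Function.update A j u) k v)).det
      = - (Matrix.of (Function.update (Function.update A j v) k u)).det := by
  have hperm := Matrix.det_permute (Equiv.swap j k)
      (Matrix.of (Function.update (Function.update A j v) k u))
  have hM : (Matrix.of (Function.update (Function.update A j v) k u)).submatrix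
      (Equiv.swap j k) id = Matrix.of (Function.update (Function.update A j u) k v) := by
    ext r c
    rcases eq_or_ne r j with rfl | hrj
    · simp [Matrix.submatrix_apply, Equiv.swap_apply_left, Function.update_apply, hkj, hkj.symm]
    · rcases eq_or_ne r k with rfl | hrk
      · simp [Matrix.submatrix_apply, Equiv.swap_apply_right, Function.update_apply, hkj, hkj.symm]
      · simp [Matrix.submatrix_apply, Equiv.swap_apply_of_ne_of_ne hrj hrk,
          Function.update_apply, hrj, hrk]
  rw [hM] at hperm
  rw [hperm, Equiv.Perm.sign_swap (fun h => hkj h.symm)]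
  push_cast
  ring

/-- The Piola identity: for a `C²` map `ψ : ℝⁿ → ℝⁿ` with Jacobian matrix `J`, the
columns of the adjugate field `x ↦ adj(Dψ(x))` are divergence free:
`Σᵢ ∂/∂xᵢ (adj Dψ)_{ij} = 0` for every `j`. -/
theorem piola_identity
    (n : ℕ) (hn : 1 ≤ n)
    (ψ : EuclideanSpace ℝ (Fin n) → EuclideanSpace ℝ (Fin n))
    (hψ : ContDiff ℝ 2 ψ)
    (J : EuclideanSpace ℝ (Fin n) → Matrix (Fin n) (Fin n) ℝ)
    (hJ : ∀ x i j, J x i j = fderiv ℝ ψ x (EuclideanSpace.single j 1) i) :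
    ∀ (j : Fin n) (x : EuclideanSpace ℝ (Fin n)),
      ∑ i : Fin n, fderiv ℝ (fun y => (J y).adjugate i j) x (EuclideanSpace.single i 1)
        = 0 := by
  classical
  intro j x
  set e : Fin n → EuclideanSpace ℝ (Fin n) := fun a => EuclideanSpace.single a 1 with he
  have hψ1 : Differentiable ℝ ψ := hψ.differentiable (by norm_num)
  set f' : EuclideanSpace ℝ (Fin n) → EuclideanSpace ℝ (Fin n) →L[ℝ] EuclideanSpace ℝ (Fin n) :=
    fderiv ℝ ψ with hf'
  have hder : ∀ y, HasFDerivAt ψ (f' y) y := fun y => (hψ1 y).hasFDerivAt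
  have hf'c : ContDiff ℝ 1 f' := hψ.fderiv_right (m := 1) (by norm_num)
  set f'' := fderiv ℝ f' x with hf''def
  have hf'' : HasFDerivAt f' f'' x := (hf'c.differentiable (by norm_num) x).hasFDerivAt
  have hsymm : ∀ u v, f'' u v = f'' v u := fun u v => second_derivative_symmetric hder hf'' u v
  -- row evaluation maps
  set R : Fin n → (EuclideanSpace ℝ (Fin n) →L[ℝ] EuclideanSpace ℝ (Fin n)) →L[ℝ] (Fin n → ℝ) :=
    fun k => ContinuousLinearMap.pi (fun l =>
      (EuclideanSpace.proj k).comp (ContinuousLinearMap.apply ℝ (EuclideanSpace ℝ (Fin n)) (e l)))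
    with hR
  have hRapp : ∀ k (T : EuclideanSpace ℝ (Fin n) →L[ℝ] EuclideanSpace ℝ (Fin n)) l,
      R k T l = T (e l) k := by
    intro k T l
    simp [hR]
  have hJR : ∀ y k, (fun l => J y k l) = R k (f' y) := by
    intro y k
    funext l
    rw [hRapp, hJ]
  set A : Fin n → Fin n → ℝ := fun k l => J x k l with hA
  set S : Fin n → Fin n → Fin n → ℝ := fun a k l => f'' (e a) (e l) k with hS
  have hSsymm : ∀ a k l, S a k l = S l k a := by
    intro a k l
    simp only [hS]
    rw [hsymm]
  set N : Fin n → Fin n → Fin n → ℝ := fun i k l =>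
    detCM n (Function.update (Function.update A j ((Pi.single i 1 : Fin n → ℝ))) k ((Pi.single l 1 : Fin n → ℝ)))
    with hNdef
  have hNanti : ∀ i k l, k ≠ j → N i k l = - N l k i := by
    intro i k l hk
    simp only [hNdef, detCM_apply]
    exact det_update_update_swap A hk _ _
  set g' : Fin n → EuclideanSpace ℝ (Fin n) →L[ℝ] (Fin n → ℝ) :=
    fun k => if k = j then 0 else (R k).comp f'' with hg'
  have key : ∀ i : Fin n,
      fderiv ℝ (fun y => (J y).adjugate i j) x (e i)
        = ∑ k, if k = j then 0 else ∑ l, S i k l * N i k l := by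
    intro i
    set g : Fin n → EuclideanSpace ℝ (Fin n) → (Fin n → ℝ) :=
      fun k y => Function.update (fun k' l => J y k' l) j ((Pi.single i 1 : Fin n → ℝ)) k with hg
    have hgd : ∀ k, HasFDerivAt (g k) (g' k) x := by
      intro k
      by_cases hk : k = j
      · subst hk
        have h0 : g k = fun _ => Pi.single i (1:ℝ) := by
          funext y
          simp [hg]
        rw [h0, hg']
        simpa using hasFDerivAt_const (𝕜 := ℝ) ((Pi.single i 1 : Fin n → ℝ)) x
      · have h1 : g k = fun y => R k (f' y) := by
          funext y
          simp only [hg, Function.update_of_ne hk]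
          exact hJR y k
        have h2 : g' k = (R k).comp f'' := by simp [hg', hk]
        rw [h1, h2]
        exact (R k).hasFDerivAt.comp x hf''
    have hcomp := HasFDerivAt.multilinear_comp (detCM n) hgd
    have heq : (fun y => (J y).adjugate i j) = fun y => detCM n (fun k => g k y) := by
      funext y
      simp only [Matrix.adjugate_apply, detCM_apply, hg]
      rfl
    rw [heq, hcomp.fderiv]
    rw [ContinuousLinearMap.sum_apply]
    refine Finset.sum_congr rfl (fun k _ => ?_)
    have hm : (fun k' => g k' x) = Function.update A j ((Pi.single i 1 : Fin n → ℝ)) := by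
      funext k'
      simp only [hg, hA]
    by_cases hk : k = j
    · subst hk
      simp [hg']
    · rw [if_neg hk]
      rw [ContinuousLinearMap.comp_apply]
      have hval : g' k (e i) = fun l => S i k l := by
        funext l
        simp only [hg', if_neg hk, ContinuousLinearMap.comp_apply]
        rw [hRapp]
      rw [hval, hm]
      have hrow : (fun l => S i k l) = ∑ l, (S i k l) • ((Pi.single l 1 : Fin n → ℝ)) := by
        funext l'
        simp [Finset.sum_apply, Pi.single_apply]
      rw [hrow, map_sum]
      refine Finset.sum_congr rfl (fun l _ => ?_)
      rw [_root_.map_smul, ContinuousMultilinearMap.toContinuousLinearMap_apply, smul_eq_mul]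
  calc ∑ i : Fin n, fderiv ℝ (fun y => (J y).adjugate i j) x (e i)
      = ∑ i : Fin n, ∑ k, if k = j then 0 else ∑ l, S i k l * N i k l :=
        Finset.sum_congr rfl (fun i _ => key i)
    _ = ∑ k, ∑ i : Fin n, if k = j then 0 else ∑ l, S i k l * N i k l := Finset.sum_comm
    _ = 0 := by
        refine Finset.sum_eq_zero (fun k _ => ?_)
        by_cases hk : k = j
        · simp [hk]
        · simp only [if_neg hk]
          have h1 : (∑ i : Fin n, ∑ l, S i k l * N i k l)
              = ∑ i : Fin n, ∑ l, S l k i * N l k i := Finset.sum_comm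
          have h2 : (∑ i : Fin n, ∑ l, S l k i * N l k i)
              = ∑ i : Fin n, ∑ l, -(S i k l * N i k l) :=
            Finset.sum_congr rfl fun i _ => Finset.sum_congr rfl fun l _ => by
              rw [hSsymm l k i, hNanti l k i hk]; ring
          have h3 : (∑ i : Fin n, ∑ l, -(S i k l * N i k l))
              = -∑ i : Fin n, ∑ l, S i k l * N i k l := by
            simp
          have h4 := h1.trans (h2.trans h3)
          linarith
end
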